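/- Let γR, γL ≥ 0, τ > 0, t ∈ ℝ, and 0 < Δt < 2τ. Let 1_I denote the indicator function of the interval I = [t, t+Δt], and set T = T[γR,γL,τ]. Then ⟨T 1_I, T 1_I⟩ = (γR + γL)·Δt. (This is the rigorous form of the diagonal case of the paper's Theorem 1: for a single delayed noise channel of a semi-infinite waveguide, the non-Markovian Itô product dB_in^{(j)}(t)·dB_in^{(j)†}(t) = ∫_t^{t+dt}∫_t^{t+dt}[b_in^{(j)}(s), b_in^{(j)†}(μ)] ds dμ equals (γ_{jL}+γ_{jR})·dt when dt < z_j/c.) -/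

import Mathlib

open MeasureTheory ComplexConjugate

/-- The L² pairing ⟨f,g⟩ = ∫ conj(f t) · g t dt. -/
noncomputable def pairL2 (f g : ℝ → ℂ) : ℂ := ∫ t : ℝ, conj (f t) * g t

/-- The smeared semi-infinite-waveguide noise channel:
`(T[γR,γL,τ] f)(t) = √γR·f(t+τ) − √γL·f(t−τ)`. -/
noncomputable def Tchan (γR γL τ : ℝ) (f : ℝ → ℂ) : ℝ → ℂ :=
  fun t => (Real.sqrt γR : ℂ) * f (t + τ) - (Real.sqrt γL : ℂ) * f (t - τ)

/-- Diagonal case of Theorem 1 (non-Markovian Itô rule, semi-infinite waveguide):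
for `0 < Δt < 2τ`, pairing a single delayed channel against the indicator of
`[t, t+Δt]` gives `(γR + γL)·Δt`. -/
theorem stmt_7 (γR γL : ℝ) (hγR : 0 ≤ γR) (hγL : 0 ≤ γL)
    (τ t Δt : ℝ) (hτ : 0 < τ) (hΔt : 0 < Δt) (hΔτ : Δt < 2 * τ) :
    pairL2 (Tchan γR γL τ (Set.indicator (Set.Icc t (t + Δt)) fun _ => (1 : ℂ)))
           (Tchan γR γL τ (Set.indicator (Set.Icc t (t + Δt)) fun _ => (1 : ℂ))) =
      (((γR + γL) * Δt : ℝ) : ℂ) := by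
  set F : ℝ → ℂ := Set.indicator (Set.Icc t (t + Δt)) fun _ => (1 : ℂ) with hF
  have hFint : Integrable F := by
    rw [hF, integrable_indicator_iff measurableSet_Icc]
    exact integrableOn_const (by simp [Real.volume_Icc])
  have hptw : ∀ s : ℝ, conj (Tchan γR γL τ F s) * Tchan γR γL τ F s
      = (γR : ℂ) * F (s + τ) + (γL : ℂ) * F (s - τ) := by
    intro s
    have hdisj : ¬ (s + τ ∈ Set.Icc t (t + Δt) ∧ s - τ ∈ Set.Icc t (t + Δt)) := by
      rintro ⟨⟨_, h1⟩, ⟨h2, _⟩⟩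
      linarith
    have hsq : ∀ γ : ℝ, 0 ≤ γ → ((Real.sqrt γ : ℝ) : ℂ) * (Real.sqrt γ : ℂ) = (γ : ℂ) := by
      intro γ hγ
      rw [← Complex.ofReal_mul, Real.mul_self_sqrt hγ]
    simp only [Tchan, hF]
    by_cases h1 : s + τ ∈ Set.Icc t (t + Δt)
    · have h2 : s - τ ∉ Set.Icc t (t + Δt) := fun h => hdisj ⟨h1, h⟩
      simp [Set.indicator_of_mem h1, Set.indicator_of_notMem h2, hsq γR hγR]
    · by_cases h2 : s - τ ∈ Set.Icc t (t + Δt)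
      · simp [Set.indicator_of_mem h2, Set.indicator_of_notMem h1, hsq γL hγL]
      · simp [Set.indicator_of_notMem h1, Set.indicator_of_notMem h2]
  have hFval : ∫ s : ℝ, F s = (Δt : ℂ) := by
    rw [hF, integral_indicator_const _ measurableSet_Icc]
    simp [Real.volume_Icc, hΔt.le, ENNReal.toReal_ofReal]
  have hint1 : Integrable (fun s : ℝ => F (s + τ)) := hFint.comp_add_right τ
  have hint2 : Integrable (fun s : ℝ => F (s - τ)) := hFint.comp_sub_right τ
  calc pairL2 (Tchan γR γL τ F) (Tchan γR γL τ F)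
      = ∫ s : ℝ, ((γR : ℂ) * F (s + τ) + (γL : ℂ) * F (s - τ)) := by
        unfold pairL2; exact integral_congr_ae (Filter.Eventually.of_forall hptw)
    _ = (γR : ℂ) * (∫ s : ℝ, F (s + τ)) + (γL : ℂ) * (∫ s : ℝ, F (s - τ)) := by
        rw [integral_add (hint1.const_mul _) (hint2.const_mul _),
          integral_const_mul, integral_const_mul]
    _ = (γR : ℂ) * (Δt : ℂ) + (γL : ℂ) * (Δt : ℂ) := by
        rw [integral_add_right_eq_self F τ, integral_sub_right_eq_self F τ, hFval]
    _ = (((γR + γL) * Δt : ℝ) : ℂ) := by push_cast; ring
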